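/- Let X be an abelian group with a translation-invariant metric such that K := sup over x ∈ X of ‖2x‖ is finite, and fix a ∈ X with a ≠ 0. Define f : X → X by f(0) = a and f(x) = x for x ≠ 0. Then for all x, y ∈ X with x ≠ 0 and y ≠ 0, ‖x − y‖ · ‖f(x+y) − f(x) − f(y)‖ ≤ K · ‖a‖, yet f is not additive. Hence the hypothesis that 2X be unbounded cannot be omitted from the hyperstability theorem for the Cauchy equation. -/

import Mathlib

open scoped Classical

/-- The unboundedness of `2X` cannot be omitted from the hyperstability theorem:
if `‖2x‖ ≤ K` for all `x`, the indicated `f` satisfies the weighted estimate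
with `φ(t) = t` but is not additive. -/
theorem cauchy_hyperstability_counterexample
    {X : Type*} [AddCommGroup X] [MetricSpace X]
    (hdX : ∀ x y z : X, dist (x + z) (y + z) = dist x y)
    (K : ℝ) (hK : ∀ x : X, dist (x + x) 0 ≤ K)
    (a : X) (ha : a ≠ 0)
    (f : X → X) (hfdef : ∀ x : X, f x = if x = 0 then a else x) :
    (∀ x y : X, x ≠ 0 → y ≠ 0 →
      dist x y * dist (f (x + y)) (f x + f y) ≤ K * dist a 0) ∧
    ¬ (∀ x y : X, f (x + y) = f x + f y) := by
  have hK0 : 0 ≤ K := le_trans (by simp) (hK 0)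
  constructor
  · intro x y hx hy
    by_cases hxy : x + y = 0
    · have hyx : y = -x := by linear_combination (norm := abel) hxy
      have h1 : f (x + y) = a := by rw [hfdef, if_pos hxy]
      have h2 : f x + f y = 0 := by
        rw [hfdef, hfdef, if_neg hx, if_neg hy, hxy]
      have h3 : dist x y = dist (x + x) 0 := by
        rw [hyx]
        have := hdX x (-x) x
        simpa using this.symm
      rw [h1, h2, h3]
      exact mul_le_mul_of_nonneg_right (hK x) dist_nonneg
    · have h1 : f (x + y) = x + y := by rw [hfdef, if_neg hxy]
      have h2 : f x + f y = x + y := by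
        rw [hfdef, hfdef, if_neg hx, if_neg hy]
      rw [h1, h2, dist_self]
      exact mul_nonneg hK0 dist_nonneg |>.trans_eq' (mul_zero _).symm
  · intro h
    have := h a (-a)
    rw [hfdef, hfdef, hfdef] at this
    simp only [add_neg_cancel, if_pos rfl, ↓reduceIte, if_neg ha, neg_eq_zero, if_neg ha] at this
    exact ha (by linear_combination (norm := abel) this)
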